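/- Let G = (V, E_1, …, E_k) be a multilayer graph, E_i^N ⊆ (V choose 2)∖E_i sets of new edges, and S_i* ⊆ E_i ∪ E_i^N labelings (i ∈ [k]), and let s* = Σ_{i∈[k]} |(E_i^N ∪ E_i) ∖ S_i*| + d_k(S_1*,…,S_k*), where disagreements are computed over the edge sets E_i ∪ E_i^N. Define F_i = { e ∈ S_i* : e ∈ (E_j ∪ E_j^N)∖S_j* for some j ∈ [k] } and H_i* = S_i* ∖ F_i. Then d_k(H_1*,…,H_k*) = 0 and Σ_{i∈[k]} |(E_i^N ∪ E_i) ∖ H_i*| = s*; moreover, if each S_i* fulfills the STC for E_i ∪ E_i^N, then so does each H_i*. -/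

import Mathlib

open Finset

/-- A wedge `(v, {u, w})` of an edge set `E`. -/
def IsWedge {V : Type*} (E : Finset (Sym2 V)) (v u w : V) : Prop :=
  u ≠ v ∧ v ≠ w ∧ u ≠ w ∧ s(u, v) ∈ E ∧ s(v, w) ∈ E ∧ s(u, w) ∉ E

/-- A labeling `S ⊆ E` fulfills the strong triadic closure for `E`. -/
def FulfillsSTC {V : Type*} (E S : Finset (Sym2 V)) : Prop :=
  ∀ u v w : V, u ≠ v → v ≠ w → u ≠ w → s(u, v) ∈ S → s(v, w) ∈ S → s(u, w) ∈ E

/-- `s(e)`: the number of layers in which `e` is labeled strong. -/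
def sCount {V : Type*} [DecidableEq V] {k : ℕ} (Ss : Fin k → Finset (Sym2 V))
    (e : Sym2 V) : ℕ :=
  (Finset.univ.filter fun i => e ∈ Ss i).card

/-- `w(e)`: the number of layers in which `e` is labeled weak. -/
def wCount {V : Type*} [DecidableEq V] {k : ℕ} (Es Ss : Fin k → Finset (Sym2 V))
    (e : Sym2 V) : ℕ :=
  (Finset.univ.filter fun i => e ∈ Es i ∧ e ∉ Ss i).card

/-- `d_k(S_1, …, S_k) = ∑_{e ∈ E, w(e) > 0} s(e)`: the number of disagreements. -/
def disagree {V : Type*} [DecidableEq V] {k : ℕ} (Es Ss : Fin k → Finset (Sym2 V)) : ℕ :=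
  ∑ e ∈ (Finset.univ.biUnion Es).filter (fun e => 0 < wCount Es Ss e), sCount Ss e

/-- `(V choose 2)`: the set of all 2-element subsets of `V`, as elements of `Sym2 V`. -/
def allPairs (V : Type*) [Fintype V] [DecidableEq V] : Finset (Sym2 V) :=
  Finset.univ.filter fun e => ¬ e.IsDiag

/-- STC+ version of the consistent-relabeling lemma: with new weak edges
`E_i^N ⊆ (V choose 2) ∖ E_i` and labelings `S_i* ⊆ E_i ∪ E_i^N`, removing from each
`S_i*` the strong edges that are weak in some layer yields labelings `H_i*` with no
disagreements whose objective value `∑_i |(E_i^N ∪ E_i) ∖ H_i*|` equals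
`s* = ∑_i |(E_i^N ∪ E_i) ∖ S_i*| + d_k(S_1*, …, S_k*)`; moreover if each `S_i*`
fulfills the STC for `E_i ∪ E_i^N` then so does each `H_i*`. -/
theorem consistent_relabeling_plus {V : Type*} [Fintype V] [DecidableEq V] {k : ℕ}
    (Es ENs Ss : Fin k → Finset (Sym2 V))
    (hEN : ∀ i, ENs i ⊆ allPairs V \ Es i)
    (hS : ∀ i, Ss i ⊆ Es i ∪ ENs i) :
    let A : Fin k → Finset (Sym2 V) := fun i => Es i ∪ ENs i
    let F : Fin k → Finset (Sym2 V) :=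
      fun i => (Ss i).filter fun e => ∃ j, e ∈ A j ∧ e ∉ Ss j
    let H : Fin k → Finset (Sym2 V) := fun i => Ss i \ F i
    disagree A H = 0 ∧
      (∑ i : Fin k, (A i \ H i).card) =
        (∑ i : Fin k, (A i \ Ss i).card) + disagree A Ss ∧
      ((∀ i, FulfillsSTC (A i) (Ss i)) → ∀ i, FulfillsSTC (A i) (H i)) := by
  intro A F H
  have hFS : ∀ i, F i ⊆ Ss i := fun i => Finset.filter_subset _ _
  have hSA : ∀ i, Ss i ⊆ A i := fun i => hS i
  have hmemT : ∀ i e, e ∈ Ss i → e ∈ Finset.univ.biUnion A := fun i e h =>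
    Finset.mem_biUnion.mpr ⟨i, Finset.mem_univ i, hSA i h⟩
  have hcond : ∀ e, (∃ j, e ∈ A j ∧ e ∉ Ss j) ↔ 0 < wCount A Ss e := by
    intro e
    rw [wCount, Finset.card_pos]
    constructor
    · rintro ⟨j, hj⟩; exact ⟨j, Finset.mem_filter.mpr ⟨Finset.mem_univ j, hj⟩⟩
    · rintro ⟨j, hj⟩; exact ⟨j, (Finset.mem_filter.mp hj).2⟩
  refine ⟨?_, ?_, ?_⟩
  · apply Finset.sum_eq_zero
    intro e he
    rw [Finset.mem_filter] at he
    obtain ⟨-, hw⟩ := he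
    rw [wCount, Finset.card_pos] at hw
    obtain ⟨j, hj⟩ := hw
    rw [Finset.mem_filter] at hj
    obtain ⟨-, hjA, hjH⟩ := hj
    rw [sCount, Finset.card_eq_zero, Finset.filter_eq_empty_iff]
    intro i _ hi
    simp only [H, F, Finset.mem_sdiff, Finset.mem_filter] at hi hjH
    push_neg at hi hjH
    obtain ⟨hiS, hic⟩ := hi
    have hnc : ∀ j, e ∈ A j → e ∈ Ss j := hic hiS
    obtain ⟨j', hj'A, hj'S⟩ := (hjH (hnc j hjA)).2
    exact hj'S (hnc j' hj'A)
  · have hstep : ∀ i, (A i \ H i).card = (A i \ Ss i).card + (F i).card := by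
      intro i
      have hdisj : Disjoint (A i \ Ss i) (F i) :=
        Finset.disjoint_left.mpr fun e he heF => (Finset.mem_sdiff.mp he).2 (hFS i heF)
      rw [← Finset.card_union_of_disjoint hdisj]
      congr 1
      ext e
      have hAi : e ∈ Ss i → e ∈ A i := fun h => hSA i h
      simp only [H, F, Finset.mem_sdiff, Finset.mem_union, Finset.mem_filter]
      constructor
      · rintro ⟨heA, hne⟩
        by_cases hs : e ∈ Ss i
        · right; exact ⟨hs, by by_contra hc; exact hne ⟨hs, fun h => hc h.2⟩⟩
        · left; exact ⟨heA, hs⟩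
      · rintro (⟨heA, hs⟩ | ⟨hs, hc⟩)
        · exact ⟨heA, fun h => hs h.1⟩
        · exact ⟨hAi hs, fun h => h.2 ⟨hs, hc⟩⟩
    rw [Finset.sum_congr rfl (fun i _ => hstep i), Finset.sum_add_distrib]
    congr 1
    set T := (Finset.univ.biUnion A).filter (fun e => 0 < wCount A Ss e) with hT
    have hF : ∀ i, F i = T.filter (fun e => e ∈ Ss i) := by
      intro i
      ext e
      simp only [F, hT, Finset.mem_filter]
      constructor
      · rintro ⟨hs, hc⟩
        exact ⟨⟨hmemT i e hs, (hcond e).mp hc⟩, hs⟩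
      · rintro ⟨⟨-, hw⟩, hs⟩
        exact ⟨hs, (hcond e).mpr hw⟩
    calc (∑ i, (F i).card) = ∑ i, (T.filter (fun e => e ∈ Ss i)).card := by
          exact Finset.sum_congr rfl fun i _ => by rw [hF i]
      _ = ∑ i, ∑ e ∈ T, if e ∈ Ss i then 1 else 0 := by
          simp [Finset.card_filter]
      _ = ∑ e ∈ T, ∑ i, if e ∈ Ss i then 1 else 0 := Finset.sum_comm
      _ = disagree A Ss := by
          rw [disagree]
          exact Finset.sum_congr rfl fun e _ => by rw [sCount, Finset.card_filter]
  · intro hSTC i u v w h1 h2 h3 huv hvw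
    exact hSTC i u v w h1 h2 h3 (Finset.mem_sdiff.mp huv).1 (Finset.mem_sdiff.mp hvw).1
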